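/- The hypergraph categories Hgph^≤_m and Hgph^=_m satisfy the triangle condition: whenever ι : H → H'' and ι' : H' → H'' are monomorphisms in the category and χ : Φ(H) → Φ(H') is an injective set map with Φι = Φι' ∘ χ, then χ itself is (the underlying map of) a monomorphism of the category from H to H', so there is a monomorphism φ : H → H' with ι = ι' ∘ φ. -/

import Mathlib

/-- A hypergraph: finite sets of vertices and hyperedges, with a nonempty
incidence set of vertices for every hyperedge. -/
structure FinHypergraph where
  V : Type
  E : Type
  finV : Finite V
  finE : Finite E
  inc : E → Set V
  inc_nonempty : ∀ e, (inc e).Nonempty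

/-- A hypergraph morphism: maps vertices to vertices, hyperedges to hyperedges,
and preserves incidence. -/
structure HGHom (H H' : FinHypergraph) where
  fv : H.V → H'.V
  fe : H.E → H'.E
  incid : ∀ (e : H.E) (v : H.V), v ∈ H.inc e → fv v ∈ H'.inc (fe e)

/-- Composition of hypergraph morphisms. -/
def HGHom.comp {H H' H'' : FinHypergraph} (f : HGHom H H') (g : HGHom H' H'') : HGHom H H'' where
  fv := g.fv ∘ f.fv
  fe := g.fe ∘ f.fe
  incid := fun e v hv => g.incid _ _ (f.incid e v hv)

/-- The identity hypergraph morphism. -/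
def HGHom.id (H : FinHypergraph) : HGHom H H :=
  ⟨fun v => v, fun e => e, fun _ _ h => h⟩

/-- A hypergraph morphism is a monomorphism if it is left-cancellable. -/
def IsHGMono {H H' : FinHypergraph} (f : HGHom H H') : Prop :=
  ∀ (K : FinHypergraph) (g g' : HGHom K H), g.comp f = g'.comp f → g = g'

/-- The underlying map `V ⊔ E → V' ⊔ E'` of a hypergraph morphism. -/
def HGHom.toFun {H H' : FinHypergraph} (f : HGHom H H') : H.V ⊕ H.E → H'.V ⊕ H'.E :=
  Sum.map f.fv f.fe

/-- A morphism reflects incidence (`Hgph^≤`): `f(v) ∈ f(e)` implies `v ∈ e`. -/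
def HGHom.Leq {H H' : FinHypergraph} (f : HGHom H H') : Prop :=
  ∀ (e : H.E) (v : H.V), f.fv v ∈ H'.inc (f.fe e) → v ∈ H.inc e

/-- A morphism is injective on vertices and hyperedges. -/
def HGHom.Inj {H H' : FinHypergraph} (f : HGHom H H') : Prop :=
  Function.Injective f.fv ∧ Function.Injective f.fe

/-- A morphism preserves hyperedge sizes (`Hgph^=`). -/
def HGHom.SizeEq {H H' : FinHypergraph} (f : HGHom H H') : Prop :=
  ∀ e : H.E, Nat.card (H'.inc (f.fe e)) = Nat.card (H.inc e)

/-- the categories `Hgph^≤_m` and `Hgph^=_m` satisfy the triangle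
condition: a factorization of underlying injections lifts to a monomorphism of the
corresponding category. -/
lemma triangle_aux (H H' H'' : FinHypergraph) (ι : HGHom H H'') (ι' : HGHom H' H'')
    (hι : ι.Inj) (hι' : ι'.Inj) (hL : ι.Leq) (hL' : ι'.Leq)
    (χ : H.V ⊕ H.E → H'.V ⊕ H'.E) (hχ : Function.Injective χ)
    (hfac : ι.toFun = ι'.toFun ∘ χ) :
    ∃ φ : HGHom H H', φ.Inj ∧ φ.Leq ∧ φ.toFun = χ ∧ ι = φ.comp ι' := by
  have hv : ∀ v : H.V, ∃ v', χ (Sum.inl v) = Sum.inl v' ∧ ι'.fv v' = ι.fv v := by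
    intro v
    have := congrFun hfac (Sum.inl v)
    simp only [HGHom.toFun, Function.comp] at this
    rcases h : χ (Sum.inl v) with v' | e'
    · rw [h] at this; exact ⟨v', rfl, (Sum.inl.inj this.symm)⟩
    · rw [h] at this; simp [Sum.map] at this
  have he : ∀ e : H.E, ∃ e', χ (Sum.inr e) = Sum.inr e' ∧ ι'.fe e' = ι.fe e := by
    intro e
    have := congrFun hfac (Sum.inr e)
    simp only [HGHom.toFun, Function.comp] at this
    rcases h : χ (Sum.inr e) with v' | e'
    · rw [h] at this; simp [Sum.map] at this
    · rw [h] at this; exact ⟨e', rfl, (Sum.inr.inj this.symm)⟩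
  choose fv hfv1 hfv2 using hv
  choose fe hfe1 hfe2 using he
  have incid : ∀ (e : H.E) (v : H.V), v ∈ H.inc e → fv v ∈ H'.inc (fe e) := by
    intro e v hve
    apply hL'
    rw [hfv2, hfe2]
    exact ι.incid e v hve
  refine ⟨⟨fv, fe, incid⟩, ⟨?_, ?_⟩, ?_, ?_, ?_⟩
  · intro a b hab
    have : χ (Sum.inl a) = χ (Sum.inl b) := by rw [hfv1, hfv1]; exact congrArg Sum.inl hab
    exact Sum.inl.inj (hχ this)
  · intro a b hab
    have : χ (Sum.inr a) = χ (Sum.inr b) := by rw [hfe1, hfe1]; exact congrArg Sum.inr hab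
    exact Sum.inr.inj (hχ this)
  · intro e v hmem
    apply hL
    rw [← hfv2 v, ← hfe2 e]
    exact ι'.incid _ _ hmem
  · funext x
    rcases x with v | e
    · simp [HGHom.toFun, Sum.map, hfv1]
    · simp [HGHom.toFun, Sum.map, hfe1]
  · cases ι with
    | mk fvι feι incι =>
      simp only [HGHom.comp]
      congr 1
      · funext v; exact (hfv2 v).symm
      · funext e; exact (hfe2 e).symm

theorem hypergraph_triangle_condition :
    (∀ (H H' H'' : FinHypergraph) (ι : HGHom H H'') (ι' : HGHom H' H''),
        ι.Inj → ι'.Inj → ι.Leq → ι'.Leq →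
        ∀ χ : H.V ⊕ H.E → H'.V ⊕ H'.E, Function.Injective χ →
          ι.toFun = ι'.toFun ∘ χ →
          ∃ φ : HGHom H H', φ.Inj ∧ φ.Leq ∧ φ.toFun = χ ∧ ι = φ.comp ι') ∧
    (∀ (H H' H'' : FinHypergraph) (ι : HGHom H H'') (ι' : HGHom H' H''),
        ι.Inj → ι'.Inj → ι.Leq → ι'.Leq → ι.SizeEq → ι'.SizeEq →
        ∀ χ : H.V ⊕ H.E → H'.V ⊕ H'.E, Function.Injective χ →
          ι.toFun = ι'.toFun ∘ χ →
          ∃ φ : HGHom H H', φ.Inj ∧ φ.Leq ∧ φ.SizeEq ∧ φ.toFun = χ ∧ ι = φ.comp ι') := by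
  constructor
  · intro H H' H'' ι ι' hι hι' hL hL' χ hχ hfac
    exact triangle_aux H H' H'' ι ι' hι hι' hL hL' χ hχ hfac
  · intro H H' H'' ι ι' hι hι' hL hL' hS hS' χ hχ hfac
    obtain ⟨φ, hφi, hφl, hφt, hφc⟩ :=
      triangle_aux H H' H'' ι ι' hι hι' hL hL' χ hχ hfac
    refine ⟨φ, hφi, hφl, ?_, hφt, hφc⟩
    intro e
    have h1 : ι'.fe (φ.fe e) = ι.fe e := by
      rw [hφc]; rfl
    have h2 := hS' (φ.fe e)
    have h3 := hS e
    rw [h1] at h2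
    omega
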